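/- Define f : ℝ → ℝ by f(x) = |x|^{1/4} if |x| ≤ 1 and f(x) = 1 if |x| > 1, and let W : ℝ → ℝ be the 1-periodic function with W(y) = 1/2 − |y| for y ∈ [−1/2, 1/2]. Then for every ε ∈ (0, 2^{−80}) and every absolutely continuous curve γ : [0,1] → ℝ with γ(0) = 0, one has ∫₀¹ ( f(γ(s)) + W(γ(s)/ε) + |γ̇(s)|²/2 ) ds ≥ (1/32) ε^{1/4}. -/
import Mathlib


open MeasureTheory Real Set

noncomputable section

/-- `f(x) = |x|^{1/4}` for `|x| ≤ 1`, and `f(x) = 1` for `|x| > 1`. -/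
def f (x : ℝ) : ℝ := if |x| ≤ 1 then |x| ^ ((1:ℝ)/4) else 1

/-- The 1-periodic extension of `y ↦ 1/2 − |y|` from `[−1/2, 1/2]`; equivalently
`W(y) = 1/2 − dist(y, ℤ)`. -/
def W (y : ℝ) : ℝ := 1/2 - |y - round y|

/-- `γ : [a,b] → ℝ` is absolutely continuous with (a.e.) derivative `γ'`. -/
def IsAC1 (a b : ℝ) (γ γ' : ℝ → ℝ) : Prop :=
  IntegrableOn γ' (Icc a b) volume ∧
    ∀ c d : ℝ, a ≤ c → c ≤ d → d ≤ b → γ d - γ c = ∫ s in c..d, γ' s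

lemma key_pointwise (ε : ℝ) (hε : 0 < ε) (hε1 : ε ≤ 1) (x v : ℝ) :
    (1/32 : ℝ) * ε ^ ((1:ℝ)/4) ≤ f x + W (x / ε) + |v| ^ 2 / 2 := by
  have hW0 : 0 ≤ W (x / ε) := by
    have := abs_sub_round (x / ε)
    unfold W; linarith
  have hf0 : 0 ≤ f x := by
    unfold f; split
    · exact Real.rpow_nonneg (abs_nonneg x) _
    · norm_num
  have hv : 0 ≤ |v| ^ 2 / 2 := by positivity
  have hε4 : ε ^ ((1:ℝ)/4) ≤ 1 := Real.rpow_le_one hε.le hε1 (by norm_num)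
  rcases lt_or_ge |x| (ε/4) with h | h
  · -- W term is large
    have hr : round (x / ε) = 0 := by
      rw [round_eq_zero_iff]
      have hx : |x / ε| < 1/4 := by
        rw [abs_div, abs_of_pos hε]
        rw [div_lt_iff₀ hε]
        nlinarith [abs_nonneg x]
      constructor
      · linarith [neg_abs_le (x / ε)]
      · have := le_abs_self (x / ε); simp; linarith
    have hx : |x / ε| < 1/4 := by
      rw [abs_div, abs_of_pos hε, div_lt_iff₀ hε]
      nlinarith [abs_nonneg x]
    have hW : (1/4 : ℝ) ≤ W (x / ε) := by
      unfold W; rw [hr]; push_cast; rw [sub_zero]; linarith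
    nlinarith
  · -- f term is large
    have hq : (1/32 : ℝ) * ε ^ ((1:ℝ)/4) ≤ (ε/4) ^ ((1:ℝ)/4) := by
      have h14 : ((1:ℝ)/4) ≤ ((1:ℝ)/4) ^ ((1:ℝ)/4) := by
        have := Real.rpow_le_rpow_of_exponent_ge (x := (1:ℝ)/4)
          (by norm_num) (by norm_num) (by norm_num : (1:ℝ)/4 ≤ 1)
        rwa [Real.rpow_one] at this
      have hm : (ε/4 : ℝ) ^ ((1:ℝ)/4) = ((1:ℝ)/4) ^ ((1:ℝ)/4) * ε ^ ((1:ℝ)/4) := by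
        rw [← Real.mul_rpow (by norm_num) hε.le]
        ring_nf
      rw [hm]
      have hnn : (0:ℝ) ≤ ε ^ ((1:ℝ)/4) := Real.rpow_nonneg hε.le _
      nlinarith
    have hf : (ε/4 : ℝ) ^ ((1:ℝ)/4) ≤ f x := by
      unfold f; split
      · exact Real.rpow_le_rpow (by positivity) h (by norm_num)
      · exact Real.rpow_le_one (by positivity) (by linarith) (by norm_num)
    linarith

/-- Proposition 4.2 (variational content): without the Lipschitz-in-`x` condition
(H4), the control functional at time `1` is at least `(1/32) ε^{1/4}`.  The cost
integral is taken in `[0,∞]` since the integrand is nonnegative. -/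
theorem stmt_9 :
    ∀ ε : ℝ, 0 < ε → ε < (2:ℝ) ^ (-80 : ℤ) →
      ∀ γ γ' : ℝ → ℝ, IsAC1 0 1 γ γ' → γ 0 = 0 →
        ENNReal.ofReal ((1/32 : ℝ) * ε ^ ((1:ℝ)/4)) ≤
          ∫⁻ s in Icc (0:ℝ) 1,
            ENNReal.ofReal (f (γ s) + W (γ s / ε) + |γ' s| ^ 2 / 2) := by
  intro ε hε hε2 γ γ' _ _
  have hε1 : ε ≤ 1 := by
    have : (2:ℝ) ^ (-80 : ℤ) ≤ 1 := by norm_num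
    linarith
  calc ENNReal.ofReal ((1/32 : ℝ) * ε ^ ((1:ℝ)/4))
      = ∫⁻ _ in Icc (0:ℝ) 1, ENNReal.ofReal ((1/32 : ℝ) * ε ^ ((1:ℝ)/4)) := by
        rw [setLIntegral_const, Real.volume_Icc]
        norm_num
    _ ≤ _ := lintegral_mono fun s =>
        ENNReal.ofReal_le_ofReal (key_pointwise ε hε hε1 (γ s) (γ' s))
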